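/- If I is a graded two-sided ideal of F then J = ⟨ι(I)⟩_ℕ is a letterplace ideal of P; conversely, if J is a letterplace ideal of P then I = ι^{-1}(J ∩ V) is a graded two-sided ideal of F; moreover, the assignments I ↦ ⟨ι(I)⟩_ℕ and J ↦ ι^{-1}(J ∩ V) are mutually inverse bijections between the set of graded two-sided ideals of F and the set of letterplace ideals of P. -/

import Mathlib

noncomputable section

/-! ### Common definitions for the letterplace correspondence (La Scala)

`FA K Y` is the free associative algebra `K⟨Y⟩` (monoid algebra of the free monoid on `Y`);
`PL K Y` is the letterplace polynomial algebra `K[y(j) : y ∈ Y, j ∈ ℕ*]`.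
The algebra `F̄ = K⟨X ∪ {t}⟩` is modeled as `FA K (Option X)` with `t = none`,
and similarly `P̄ = PL K (Option X)`. -/

/-- The free associative algebra `K⟨Y⟩`. -/
abbrev FA (K : Type*) [CommSemiring K] (Y : Type*) := MonoidAlgebra K (FreeMonoid Y)

/-- The letterplace polynomial algebra `K[y(j)]`, with places in `ℕ* = ℕ+`. -/
abbrev PL (K : Type*) [CommSemiring K] (Y : Type*) := MvPolynomial (Y × ℕ+) K

variable (K : Type*) [Field K]

/-- The generator of `K⟨Y⟩` corresponding to a letter. -/
def gen {Y : Type*} (y : Y) : FA K Y := MonoidAlgebra.of K (FreeMonoid Y) (FreeMonoid.of y)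

/-- The extra letter `t` of `F̄ = K⟨X ∪ {t}⟩`. -/
def tv {X : Type*} : FA K (Option X) := gen K (none : Option X)

/-- `φ : F̄ → F̄`, the algebra endomorphism with `φ(x_i) = x_i`, `φ(t) = 1`. -/
def phi {X : Type*} : FA K (Option X) →ₐ[K] FA K (Option X) :=
  (MonoidAlgebra.lift K (FA K (Option X)) (FreeMonoid (Option X)))
    (FreeMonoid.lift fun o => Option.elim o 1 (fun x => gen K (some x)))

/-- `f` is homogeneous of degree `d` (all words in its support have length `d`). -/
def IsHomog {Y : Type*} (d : ℕ) (f : FA K Y) : Prop :=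
  ∀ w ∈ f.coeff.support, FreeMonoid.length w = d

/-- The homogeneous component of degree `d` of `f ∈ K⟨Y⟩`. -/
def homComp {Y : Type*} (d : ℕ) (f : FA K Y) : FA K Y :=
  ∑ w ∈ f.coeff.support.filter (fun w => FreeMonoid.length w = d), MonoidAlgebra.single w (f.coeff w)

/-- A two-sided ideal is graded (for the grading by total degree) iff it contains all
homogeneous components of its elements. -/
def IsGradedF {Y : Type*} (I : TwoSidedIdeal (FA K Y)) : Prop := ∀ f ∈ I, ∀ d, homComp K d f ∈ I

/-- `C ⊆ F̄`: the two-sided ideal generated by all homogeneous elements of `ker φ`,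
i.e. the largest graded ideal contained in `ker φ`. -/
def Cideal {X : Type*} : TwoSidedIdeal (FA K (Option X)) :=
  TwoSidedIdeal.span {f | (∃ d, IsHomog K d f) ∧ phi K f = 0}

/-- The embedding of free monoids `X* → (X ∪ {t})*`. -/
def embWord {X : Type*} : FreeMonoid X →* FreeMonoid (Option X) := FreeMonoid.map some

/-- The canonical embedding `F = K⟨X⟩ → F̄ = K⟨X ∪ {t}⟩`. -/
def emb {X : Type*} : FA K X →ₐ[K] FA K (Option X) :=
  (MonoidAlgebra.lift K (FA K (Option X)) (FreeMonoid X))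
    ((MonoidAlgebra.of K (FreeMonoid (Option X))).comp embWord)

/-- The top degree `deg(f)` of `f` (max length of a word in the support). -/
def degF {Y : Type*} (f : FA K Y) : ℕ := f.coeff.support.sup FreeMonoid.length

/-- The homogenization `f^* = Σ_k f_k t^{deg f − k} ∈ F̄` of `f ∈ F`. -/
def hstar {X : Type*} (f : FA K X) : FA K (Option X) :=
  ∑ w ∈ f.coeff.support,
    MonoidAlgebra.single
      (embWord w * (FreeMonoid.of (none : Option X)) ^ (degF K f - FreeMonoid.length w)) (f.coeff w)

/-- Homogenization of an element already written in `F̄` (used for elements of `φ(F̄) = F`). -/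
def hstarO {X : Type*} (f : FA K (Option X)) : FA K (Option X) :=
  ∑ w ∈ f.coeff.support,
    MonoidAlgebra.single
      (w * (FreeMonoid.of (none : Option X)) ^ (degF K f - FreeMonoid.length w)) (f.coeff w)

/-- The homogenization `I^*` of an ideal `I ⊆ F`: the two-sided ideal of `F̄` generated by all
homogeneous elements of `φ⁻¹(I)` (identifying `F` with its image in `F̄`). -/
def hstarIdeal {X : Type*} (I : TwoSidedIdeal (FA K X)) : TwoSidedIdeal (FA K (Option X)) :=
  TwoSidedIdeal.span {g | (∃ d, IsHomog K d g) ∧ ∃ f ∈ I, phi K g = emb K f}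

/-- The saturation `Sat(J) = φ(J)^*` of a graded ideal `C ⊆ J ⊆ F̄`: the two-sided ideal
generated by all homogeneous elements `g` with `φ(g) ∈ φ(J)`. -/
def SatF {X : Type*} (J : TwoSidedIdeal (FA K (Option X))) : TwoSidedIdeal (FA K (Option X)) :=
  TwoSidedIdeal.span {g | (∃ d, IsHomog K d g) ∧ ∃ h ∈ J, phi K g = phi K h}

/-! ### The commutative (letterplace) side -/

/-- The shift of letterplace variables: `k · y(j) = y(j + k)`. -/
def shiftVar {Y : Type*} (k : ℕ) (p : Y × ℕ+) : Y × ℕ+ :=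
  (p.1, ⟨p.2 + k, Nat.add_pos_left p.2.2 k⟩)

/-- The action of `k ∈ ℕ` on the letterplace algebra. -/
def shift {Y : Type*} (k : ℕ) : PL K Y →ₐ[K] PL K Y := MvPolynomial.rename (shiftVar k)

/-- An ideal of `PL K Y` is an ℕ-ideal if it is stable under all shifts. -/
def IsNIdeal {Y : Type*} (I : Ideal (PL K Y)) : Prop := ∀ k, ∀ f ∈ I, shift K k f ∈ I

/-- The ℕ-ideal `⟨S⟩_ℕ` generated by a set `S`. -/
def nspan {Y : Type*} (S : Set (PL K Y)) : Ideal (PL K Y) :=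
  Ideal.span {g | ∃ k, ∃ f ∈ S, g = shift K k f}

/-- The place multidegree `∂(m)` of a monomial. -/
def placeDeg {Y : Type*} (m : (Y × ℕ+) →₀ ℕ) : ℕ+ →₀ ℕ := Finsupp.mapDomain Prod.snd m

/-- `f` is multihomogeneous of place multidegree `μ`. -/
def IsMultiHomog {Y : Type*} (μ : ℕ+ →₀ ℕ) (f : PL K Y) : Prop :=
  ∀ m ∈ f.support, placeDeg m = μ

/-- The multihomogeneous component of multidegree `μ` of `f`. -/
def mComp {Y : Type*} (μ : ℕ+ →₀ ℕ) (f : PL K Y) : PL K Y :=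
  ∑ m ∈ f.support.filter (fun m => placeDeg m = μ),
    MvPolynomial.monomial m (MvPolynomial.coeff m f)

/-- An ideal is multigraded iff it contains all multihomogeneous components of its elements. -/
def IsMultiGraded {Y : Type*} (I : Ideal (PL K Y)) : Prop := ∀ f ∈ I, ∀ μ, mComp K μ f ∈ I

/-- `ψ : P̄ → P̄`, with `ψ(x_i(j)) = x_i(j)` and `ψ(t(j)) = 1`. -/
def psi {X : Type*} : PL K (Option X) →ₐ[K] PL K (Option X) :=
  MvPolynomial.aeval (fun p => Option.elim p.1 1 (fun x => MvPolynomial.X (some x, p.2)))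

/-- The canonical embedding `P → P̄`. -/
def embP {X : Type*} : PL K X →ₐ[K] PL K (Option X) :=
  MvPolynomial.rename (fun p => (some p.1, p.2))

/-- The top multidegree `∂(f)` of `f` (componentwise max over the support). -/
def topDeg {Y : Type*} (f : PL K Y) : ℕ+ →₀ ℕ := f.support.sup placeDeg

/-- The pure-`t` monomial `∏_k t(k)^{ν_k}` with exponents `ν`. -/
def tExp {X : Type*} (ν : ℕ+ →₀ ℕ) : ((Option X) × ℕ+) →₀ ℕ :=
  Finsupp.mapDomain (fun k => ((none : Option X), k)) ν

/-- The multihomogenization `f^* = Σ_μ f_μ ∏_k t(k)^{ν_k − μ_k} ∈ P̄` of `f ∈ P`. -/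
def mhstar {X : Type*} (f : PL K X) : PL K (Option X) :=
  ∑ m ∈ f.support,
    MvPolynomial.monomial
      (Finsupp.mapDomain (fun p => ((some p.1 : Option X), p.2)) m +
        tExp (topDeg K f - placeDeg m))
      (MvPolynomial.coeff m f)

/-- Multihomogenization of an element already written in `P̄` (used for elements of `ψ(P̄) = P`). -/
def mhstarO {X : Type*} (f : PL K (Option X)) : PL K (Option X) :=
  ∑ m ∈ f.support,
    MvPolynomial.monomial (m + tExp (topDeg K f - placeDeg m)) (MvPolynomial.coeff m f)

/-- The multihomogenization `I^*` of an ℕ-ideal `I ⊆ P`: the ℕ-ideal of `P̄` generated by all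
multihomogeneous elements of `ψ⁻¹(I)` (identifying `P` with its image in `P̄`). -/
def mhstarIdeal {X : Type*} (I : Ideal (PL K X)) : Ideal (PL K (Option X)) :=
  nspan K {g | (∃ μ, IsMultiHomog K μ g) ∧ ∃ f ∈ I, psi K g = embP K f}

/-- The saturation `Sat(J) = ψ(J)^*` of a multigraded ℕ-ideal `J ⊆ P̄`. -/
def SatP {X : Type*} (J : Ideal (PL K (Option X))) : Ideal (PL K (Option X)) :=
  nspan K {g | (∃ μ, IsMultiHomog K μ g) ∧ ∃ h ∈ J, psi K g = psi K h}

/-! ### The letterplace embedding -/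

/-- Exponent vector of the letterplace monomial `y_1(n+1) y_2(n+2) ⋯` of a word. -/
def wordExpAux {Y : Type*} : ℕ → List Y → ((Y × ℕ+) →₀ ℕ)
  | _, [] => 0
  | n, y :: w => Finsupp.single (y, ⟨n + 1, n.succ_pos⟩) 1 + wordExpAux (n + 1) w

/-- The letterplace monomial `y_1(1) y_2(2) ⋯ y_d(d)` of a word `y_1 y_2 ⋯ y_d`. -/
def wordExp {Y : Type*} (w : FreeMonoid Y) : (Y × ℕ+) →₀ ℕ := wordExpAux 0 (FreeMonoid.toList w)

/-- The letterplace embedding `ι : K⟨Y⟩ → PL K Y` (a `K`-linear map). -/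
def iota {Y : Type*} (f : FA K Y) : PL K Y :=
  Finsupp.sum f.coeff fun w c => MvPolynomial.monomial (wordExp w) c

/-- The set `L` of multilinear elements of `PL K Y`: multihomogeneous elements of `V = Im ι`. -/
def Lset {Y : Type*} : Set (PL K Y) :=
  {f | f ∈ Set.range (iota K (Y := Y)) ∧ ∃ μ, IsMultiHomog K μ f}

/-- A letterplace ideal (`L`-ideal): an ℕ-ideal ℕ-generated by its multilinear elements. -/
def IsLPIdeal {Y : Type*} (J : Ideal (PL K Y)) : Prop :=
  IsNIdeal K J ∧ J = nspan K ((J : Set (PL K Y)) ∩ Lset K)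

/-- The generators `x_i(1)t(2) − t(1)x_i(2)` of `D`. -/
def Dgens (X : Type*) : Set (PL K (Option X)) :=
  {g | ∃ x : X,
    g = MvPolynomial.X ((some x : Option X), (1 : ℕ+)) *
          MvPolynomial.X ((none : Option X), (2 : ℕ+)) -
        MvPolynomial.X ((none : Option X), (1 : ℕ+)) *
          MvPolynomial.X ((some x : Option X), (2 : ℕ+))}

/-- The generators `ῑ([t, x_i]) = t(1)x_i(2) − x_i(1)t(2)` of `D`. -/
def DgensT (X : Type*) : Set (PL K (Option X)) :=
  {g | ∃ x : X,
    g = MvPolynomial.X ((none : Option X), (1 : ℕ+)) *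
          MvPolynomial.X ((some x : Option X), (2 : ℕ+)) -
        MvPolynomial.X ((some x : Option X), (1 : ℕ+)) *
          MvPolynomial.X ((none : Option X), (2 : ℕ+))}

/-- `D ⊆ P̄`: the letterplace analogue of `C`. -/
def Did (X : Type*) : Ideal (PL K (Option X)) := nspan K (Dgens K X)

/-- The product `∏_{d < k ≤ d'} t(k)`. -/
def tProd (X : Type*) (d d' : ℕ) : PL K (Option X) :=
  ∏ k ∈ Finset.range (d' - d), MvPolynomial.X ((none : Option X), ⟨d + k + 1, Nat.succ_pos _⟩)

/-- The `L`-saturation `Sat_L(J)` of a letterplace ideal `D ⊆ J ⊆ P̄`. -/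
def SatL {X : Type*} (J : Ideal (PL K (Option X))) : Ideal (PL K (Option X)) :=
  nspan K {f | f ∈ Lset K ∧ ∃ d', MvPolynomial.totalDegree f ≤ d' ∧
    tProd K X (MvPolynomial.totalDegree f) d' * f ∈ J}

/-- `J` is `L`-saturated: `t(d+1)·f ∈ J` with `f` multilinear of degree `d` implies `f ∈ J`. -/
def IsLSat {X : Type*} (J : Ideal (PL K (Option X))) : Prop :=
  ∀ f ∈ Lset K (Y := Option X),
    MvPolynomial.X ((none : Option X), ⟨MvPolynomial.totalDegree f + 1, Nat.succ_pos _⟩) * f ∈ J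
      → f ∈ J

/-! ### Monomial orderings -/

/-- The shift action on letterplace monomials. -/
def shiftMon {Y : Type*} (k : ℕ) (m : (Y × ℕ+) →₀ ℕ) : (Y × ℕ+) →₀ ℕ :=
  Finsupp.mapDomain (shiftVar k) m

/-- A monomial ordering of a (possibly infinite) commutative polynomial ring, given as a strict
order relation on exponent vectors: a well-founded strict total order with `1` minimal,
compatible with multiplication of monomials. -/
structure IsMonOrd {σ : Type*} (r : (σ →₀ ℕ) → (σ →₀ ℕ) → Prop) : Prop where
  total : ∀ m n, r m n ∨ m = n ∨ r n m
  irrefl : ∀ m, ¬ r m m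
  trans : ∀ a b c, r a b → r b c → r a c
  wf : WellFounded r
  zero_min : ∀ m, ¬ r m 0
  add_compat : ∀ m n u, r m n → r (u + m) (u + n)

/-- The ordering is compatible with the ℕ-action (an `ℕ`-ordering). -/
def IsNCompat {Y : Type*} (r : ((Y × ℕ+) →₀ ℕ) → ((Y × ℕ+) →₀ ℕ) → Prop) : Prop :=
  ∀ (k : ℕ) m n, r m n → r (shiftMon k m) (shiftMon k n)

/-- The weight of a letterplace monomial: the largest place index occurring in it
(`⊥ = -∞` for the monomial `1`). -/
def wt {Y : Type*} (m : (Y × ℕ+) →₀ ℕ) : WithBot ℕ :=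
  m.support.sup (fun p => ((p.2 : ℕ) : WithBot ℕ))

/-- A weighted ordering: smaller weight implies smaller monomial. -/
def IsWeighted {Y : Type*} (r : ((Y × ℕ+) →₀ ℕ) → ((Y × ℕ+) →₀ ℕ) → Prop) : Prop :=
  ∀ m n, wt m < wt n → r m n

/-- A monomial ordering of the free algebra `K⟨Y⟩`: a well-founded strict total order on words
compatible with two-sided multiplication. -/
structure IsWordOrd {Y : Type*} (r : FreeMonoid Y → FreeMonoid Y → Prop) : Prop where
  total : ∀ m n, r m n ∨ m = n ∨ r n m
  irrefl : ∀ m, ¬ r m m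
  trans : ∀ a b c, r a b → r b c → r a c
  wf : WellFounded r
  mul_compat : ∀ m n u v, r m n → r (u * m * v) (u * n * v)

/-- A word ordering is graded if shorter words are smaller. -/
def IsGradedWordOrd {Y : Type*} (r : FreeMonoid Y → FreeMonoid Y → Prop) : Prop :=
  ∀ m n, FreeMonoid.length m < FreeMonoid.length n → r m n

/-- The word ordering of `K⟨Y⟩` induced by a monomial ordering of `PL K Y` via `ι`. -/
def inducedWordOrd {Y : Type*} (r : ((Y × ℕ+) →₀ ℕ) → ((Y × ℕ+) →₀ ℕ) → Prop)
    (m n : FreeMonoid Y) : Prop := r (wordExp m) (wordExp n)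

/-- The factor of a letterplace monomial at place `j` (a monomial of `P(j) ≅ P(1)`). -/
def fiber {Y : Type*} (m : (Y × ℕ+) →₀ ℕ) (j : ℕ+) : Y →₀ ℕ :=
  Finsupp.comapDomain (fun y => (y, j)) m (fun _ _ _ _ h => congrArg Prod.fst h)

/-- The place `ℕ`-ordering of `PL K Y` induced by a monomial ordering `r1` of `P(1)`:
compare the factors at the highest place where the two monomials differ. -/
def placeExt {Y : Type*} (r1 : (Y →₀ ℕ) → (Y →₀ ℕ) → Prop)
    (m n : (Y × ℕ+) →₀ ℕ) : Prop :=
  ∃ j : ℕ+, r1 (fiber m j) (fiber n j) ∧ ∀ j', j < j' → fiber m j' = fiber n j'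

/-! ### Leading monomials and Gröbner bases -/

/-- `m` is the leading monomial of `f ∈ PL K Y` with respect to the ordering `r`. -/
def IsLM {Y : Type*} (r : ((Y × ℕ+) →₀ ℕ) → ((Y × ℕ+) →₀ ℕ) → Prop)
    (f : PL K Y) (m : (Y × ℕ+) →₀ ℕ) : Prop :=
  m ∈ f.support ∧ ∀ m' ∈ f.support, m' ≠ m → r m' m

/-- `LM(S)`: the ideal generated by the leading monomials of the nonzero elements of `S`. -/
def LMideal {Y : Type*} (r : ((Y × ℕ+) →₀ ℕ) → ((Y × ℕ+) →₀ ℕ) → Prop)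
    (S : Set (PL K Y)) : Ideal (PL K Y) :=
  Ideal.span {p | ∃ f ∈ S, f ≠ 0 ∧ ∃ m, IsLM K r f m ∧ p = MvPolynomial.monomial m (1 : K)}

/-- The ideal generated by `ℕ·lm(G)`. -/
def shLMideal {Y : Type*} (r : ((Y × ℕ+) →₀ ℕ) → ((Y × ℕ+) →₀ ℕ) → Prop)
    (G : Set (PL K Y)) : Ideal (PL K Y) :=
  Ideal.span {p | ∃ g ∈ G, g ≠ 0 ∧ ∃ m, IsLM K r g m ∧
    ∃ k : ℕ, p = MvPolynomial.monomial (shiftMon k m) (1 : K)}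

/-- `G ⊆ I` is a Gröbner `ℕ`-basis of the ℕ-ideal `I`: `ℕ·lm(G)` generates `LM(I)`. -/
def IsGroebnerNB {Y : Type*} (r : ((Y × ℕ+) →₀ ℕ) → ((Y × ℕ+) →₀ ℕ) → Prop)
    (I : Ideal (PL K Y)) (G : Set (PL K Y)) : Prop :=
  G ⊆ (I : Set (PL K Y)) ∧ shLMideal K r G = LMideal K r (I : Set (PL K Y))

/-- `G` is a Gröbner `L`-basis of the letterplace ideal `J`: `G ⊆ J ∩ L` and the leading monomial
of every nonzero multilinear element of `J` is divisible by a shift of some `lm(g)`, `g ∈ G`. -/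
def IsGroebnerLB {Y : Type*} (r : ((Y × ℕ+) →₀ ℕ) → ((Y × ℕ+) →₀ ℕ) → Prop)
    (J : Ideal (PL K Y)) (G : Set (PL K Y)) : Prop :=
  G ⊆ (J : Set (PL K Y)) ∩ Lset K ∧
  ∀ f ∈ (J : Set (PL K Y)) ∩ Lset K, f ≠ 0 →
    ∃ g ∈ G, ∃ (k : ℕ) (mg mf : (Y × ℕ+) →₀ ℕ),
      IsLM K r g mg ∧ IsLM K r f mf ∧ shiftMon k mg ≤ mf

/-- `w` is the leading monomial (word) of `f ∈ K⟨Y⟩` with respect to the word ordering `r'`. -/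
def IsLMF {Y : Type*} (r' : FreeMonoid Y → FreeMonoid Y → Prop)
    (f : FA K Y) (w : FreeMonoid Y) : Prop :=
  w ∈ f.coeff.support ∧ ∀ w' ∈ f.coeff.support, w' ≠ w → r' w' w

/-- `G ⊆ I` is a Gröbner basis of the two-sided ideal `I ⊆ K⟨Y⟩`: the leading word of every
nonzero `f ∈ I` has the form `u · lm(g) · v` for some nonzero `g ∈ G`. -/
def IsGroebnerBF {Y : Type*} (r' : FreeMonoid Y → FreeMonoid Y → Prop)
    (I : TwoSidedIdeal (FA K Y)) (G : Set (FA K Y)) : Prop :=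
  G ⊆ (I : Set (FA K Y)) ∧
  ∀ f ∈ I, f ≠ 0 → ∃ g ∈ G, g ≠ 0 ∧ ∃ (u v wf wg : FreeMonoid Y),
    IsLMF K r' f wf ∧ IsLMF K r' g wg ∧ wf = u * wg * v

/-! ### Normal forms -/

/-- The generators `x_i(1) x_j(1)` of `N`. -/
def Ngens (Y : Type*) : Set (PL K Y) :=
  {g | ∃ i j : Y, g = MvPolynomial.X (i, (1 : ℕ+)) * MvPolynomial.X (j, (1 : ℕ+))}

/-- A polynomial is in normal form modulo `N` iff in each of its monomials all place indices
are pairwise distinct. -/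
def NormalModN {Y : Type*} (f : PL K Y) : Prop :=
  ∀ m ∈ f.support, ∀ k : ℕ+, placeDeg m k ≤ 1

/-- A polynomial is in normal form modulo `D` iff none of its monomials is divisible by a shift
of the leading monomial of some generator `t(1)x_i(2) − x_i(1)t(2)` of `D`. -/
def NormalModD {X : Type*} (r : (((Option X) × ℕ+) →₀ ℕ) → (((Option X) × ℕ+) →₀ ℕ) → Prop)
    (f : PL K (Option X)) : Prop :=
  ∀ m ∈ f.support, ∀ g ∈ DgensT K X, ∀ mg, IsLM K r g mg → ∀ k : ℕ, ¬ shiftMon k mg ≤ m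

/-- `G` is a Gröbner `L`-basis of `J` modulo `D`: its elements are multilinear elements of `J`
in normal form modulo `D`, and together with the generators of `D` they form a
Gröbner `L`-basis of `J`. -/
def IsGroebnerLBmodD {X : Type*}
    (r : (((Option X) × ℕ+) →₀ ℕ) → (((Option X) × ℕ+) →₀ ℕ) → Prop)
    (J : Ideal (PL K (Option X))) (G : Set (PL K (Option X))) : Prop :=
  (∀ g ∈ G, g ∈ (J : Set (PL K (Option X))) ∩ Lset K ∧ NormalModD K r g) ∧
  IsGroebnerLB K r J (G ∪ DgensT K X)

/-- The commutators `[t, x_i] = t x_i − x_i t` in `F̄`. -/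
def commGens (X : Type*) : Set (FA K (Option X)) :=
  {h | ∃ x : X, h = tv K * gen K (some x) - gen K (some x) * tv K}

/-- A polynomial of `F̄` is in normal form modulo `C` iff none of its words contains the leading
word of some commutator `[t, x_i]` as a factor. -/
def NormalModC {X : Type*} (r' : FreeMonoid (Option X) → FreeMonoid (Option X) → Prop)
    (f : FA K (Option X)) : Prop :=
  ∀ w ∈ f.coeff.support, ∀ g ∈ commGens K X, ∀ wg, IsLMF K r' g wg →
    ¬ ∃ u v, w = u * wg * v

/-! ### Concrete orderings on words -/

/-- The order on the letters of `X ∪ {t}` (with `X = ℕ`): `t ≺ x_1 ≺ x_2 ≺ ⋯`. -/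
def optLt : Option ℕ → Option ℕ → Prop
  | none, some _ => True
  | some i, some j => i < j
  | _, none => False

/-- The graded right lexicographic ordering on words: first compare lengths, then compare
letter by letter from the right. -/
def grRightLex {Y : Type*} (lt : Y → Y → Prop) (dflt : Y) (m n : FreeMonoid Y) : Prop :=
  FreeMonoid.length m < FreeMonoid.length n ∨
  (FreeMonoid.length m = FreeMonoid.length n ∧
    ∃ t < FreeMonoid.length m,
      lt ((FreeMonoid.toList m).getD t dflt) ((FreeMonoid.toList n).getD t dflt) ∧
      ∀ s, t < s → (FreeMonoid.toList m).getD s dflt = (FreeMonoid.toList n).getD s dflt)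

end


noncomputable section Aux
namespace LPAux

open MvPolynomial Finsupp

variable {K : Type*} [Field K] {Y : Type*}

/-! #### shift basics -/

lemma shiftVar_zero : (shiftVar 0 : Y × ℕ+ → Y × ℕ+) = id := by
  funext p
  simp only [shiftVar, id_eq]
  exact Prod.ext rfl (PNat.coe_injective (by simp))

lemma shiftVar_comp (k k' : ℕ) :
    (shiftVar k' ∘ shiftVar k : Y × ℕ+ → Y × ℕ+) = shiftVar (k + k') := by
  funext p
  simp only [shiftVar, Function.comp_apply]
  exact Prod.ext rfl (PNat.coe_injective (by exact add_assoc _ _ _))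

lemma shift_zero (f : PL K Y) : shift K 0 f = f := by
  show MvPolynomial.rename (shiftVar 0) f = f
  rw [shiftVar_zero, MvPolynomial.rename_id, AlgHom.id_apply]

lemma shift_shift (k k' : ℕ) (f : PL K Y) :
    shift K k' (shift K k f) = shift K (k + k') f := by
  show MvPolynomial.rename _ (MvPolynomial.rename _ f) = MvPolynomial.rename _ f
  rw [MvPolynomial.rename_rename, shiftVar_comp]

lemma mem_nspan_self {S : Set (PL K Y)} {f : PL K Y} (hf : f ∈ S) : f ∈ nspan K S :=
  Ideal.subset_span ⟨0, f, hf, (shift_zero f).symm⟩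

lemma shift_mem_nspan {S : Set (PL K Y)} (k : ℕ) {f : PL K Y} (hf : f ∈ S) :
    shift K k f ∈ nspan K S :=
  Ideal.subset_span ⟨k, f, hf, rfl⟩

lemma nspan_isNIdeal (S : Set (PL K Y)) : IsNIdeal K (nspan K S) := by
  intro k f hf
  have h1 : shift K k f ∈ Ideal.map (shift K k : PL K Y →ₐ[K] PL K Y).toRingHom
      (Ideal.span {g | ∃ k, ∃ f ∈ S, g = shift K k f}) :=
    Ideal.mem_map_of_mem _ hf
  rw [Ideal.map_span] at h1
  refine Ideal.span_le.2 ?_ h1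
  rintro g ⟨g', ⟨k', f', hf', rfl⟩, rfl⟩
  exact Ideal.subset_span ⟨k' + k, f', hf', by
    show (shift K k).toRingHom (shift K k' f') = shift K (k' + k) f'
    exact shift_shift k' k f'⟩

lemma nspan_le {S : Set (PL K Y)} {J : Ideal (PL K Y)} (hS : S ⊆ J) (hJ : IsNIdeal K J) :
    nspan K S ≤ J := by
  refine Ideal.span_le.2 ?_
  rintro g ⟨k, f, hf, rfl⟩
  exact hJ k f (hS hf)

lemma nspan_mono {S S' : Set (PL K Y)} (h : S ⊆ S') : nspan K S ≤ nspan K S' :=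
  Ideal.span_mono (fun g ⟨k, f, hf, hg⟩ => ⟨k, f, h hf, hg⟩)

/-! #### placeDeg basics -/

lemma placeDeg_zero : placeDeg (0 : (Y × ℕ+) →₀ ℕ) = 0 := Finsupp.mapDomain_zero

lemma placeDeg_add (m n : (Y × ℕ+) →₀ ℕ) : placeDeg (m + n) = placeDeg m + placeDeg n :=
  Finsupp.mapDomain_add

lemma placeDeg_single (p : Y × ℕ+) (c : ℕ) :
    placeDeg (Finsupp.single p c) = Finsupp.single p.2 c :=
  Finsupp.mapDomain_single

lemma placeDeg_apply (m : (Y × ℕ+) →₀ ℕ) (j : ℕ+) :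
    placeDeg m j = ∑ p ∈ m.support, if p.2 = j then m p else 0 := by
  classical
  rw [placeDeg, Finsupp.mapDomain, Finsupp.sum, Finsupp.finset_sum_apply]
  exact Finset.sum_congr rfl fun p _ => Finsupp.single_apply

lemma placeDeg_eq_zero {m : (Y × ℕ+) →₀ ℕ} (h : placeDeg m = 0) : m = 0 := by
  classical
  by_contra hm
  obtain ⟨p, hp⟩ : ∃ p, p ∈ m.support := by
    rcases Finset.eq_empty_or_nonempty m.support with he | ⟨p, hp⟩
    · exact absurd (Finsupp.support_eq_empty.1 he) hm
    · exact ⟨p, hp⟩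
  have h1 : (if p.2 = p.2 then m p else 0) ≤ placeDeg m p.2 := by
    rw [placeDeg_apply]
    exact Finset.single_le_sum (f := fun q => if q.2 = p.2 then m q else 0)
      (fun q _ => by positivity) hp
  rw [if_pos rfl, h] at h1
  simp only [Finsupp.coe_zero, Pi.zero_apply, Nat.le_zero] at h1
  exact Finsupp.mem_support_iff.1 hp h1

/-! #### chi -/


/-- The multidegree `χ_{[a+1, a+e]}`. -/
def chiB (a e : ℕ) : ℕ+ →₀ ℕ :=
  ∑ j ∈ Finset.range e, Finsupp.single ⟨a + j + 1, Nat.succ_pos _⟩ 1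

lemma chiB_zero (a : ℕ) : chiB a 0 = 0 := by simp [chiB]

lemma chiB_succ (a e : ℕ) :
    chiB a (e + 1) = chiB a e + Finsupp.single ⟨a + e + 1, Nat.succ_pos _⟩ 1 :=
  Finset.sum_range_succ _ _

lemma chiB_succ' (a e : ℕ) :
    chiB a (e + 1) = Finsupp.single ⟨a + 1, Nat.succ_pos _⟩ 1 + chiB (a + 1) e := by
  rw [chiB, Finset.sum_range_succ']
  rw [add_comm]
  congr 1
  refine Finset.sum_congr rfl fun j _ => ?_
  exact congrArg (fun i : ℕ+ => Finsupp.single i (1 : ℕ))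
    (PNat.coe_injective (by simp only [PNat.mk_coe]; omega))

lemma chiB_split (a b c : ℕ) : chiB a (b + c) = chiB a b + chiB (a + b) c := by
  induction c with
  | zero => simp [chiB_zero]
  | succ c ih =>
      have h : (⟨a + (b + c) + 1, Nat.succ_pos _⟩ : ℕ+) = ⟨a + b + c + 1, Nat.succ_pos _⟩ :=
        PNat.coe_injective (by simp only [PNat.mk_coe]; omega)
      rw [← add_assoc, chiB_succ, ih, chiB_succ, add_assoc, h]

lemma chiB_apply (a e : ℕ) (j : ℕ+) :
    chiB a e j = if a < (j : ℕ) ∧ (j : ℕ) ≤ a + e then 1 else 0 := by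
  induction e with
  | zero =>
      rw [chiB_zero]
      simp only [Finsupp.coe_zero, Pi.zero_apply]
      rw [if_neg (by omega)]
  | succ e ih =>
      classical
      erw [chiB_succ, Finsupp.add_apply, ih, Finsupp.single_apply]
      have hiff : ((⟨a + e + 1, Nat.succ_pos _⟩ : ℕ+) = j) ↔ ((a + e + 1 : ℕ) = (j : ℕ)) := by
        constructor
        · rintro rfl; rfl
        · intro h; exact PNat.coe_injective h
      by_cases hj : (a + e + 1 : ℕ) = (j : ℕ)
      · erw [if_pos (hiff.2 hj)]
        split_ifs <;> omega
      · erw [if_neg (fun h => hj (hiff.1 h))]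
        split_ifs <;> omega

lemma chiB_right_inj {a e e' : ℕ} (h : chiB a e = chiB a e') : e = e' := by
  by_contra hne
  rcases Nat.lt_or_ge e e' with hlt | hge
  · have h1 := DFunLike.congr_fun h ⟨a + e', by omega⟩
    erw [chiB_apply, chiB_apply, PNat.mk_coe] at h1
    split_ifs at h1 <;> omega
  · have hlt : e' < e := by omega
    have h1 := DFunLike.congr_fun h ⟨a + e, by omega⟩
    erw [chiB_apply, chiB_apply, PNat.mk_coe] at h1
    split_ifs at h1 <;> omega

/-! #### wordExp and shiftMon -/

lemma wordExpAux_nil (n : ℕ) : wordExpAux n ([] : List Y) = 0 := rfl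

lemma wordExpAux_cons (n : ℕ) (y : Y) (l : List Y) :
    wordExpAux n (y :: l) =
      Finsupp.single (y, ⟨n + 1, n.succ_pos⟩) 1 + wordExpAux (n + 1) l := rfl

lemma shiftMon_wordExpAux (k n : ℕ) (l : List Y) :
    shiftMon k (wordExpAux n l) = wordExpAux (n + k) l := by
  induction l generalizing n with
  | nil => simp [wordExpAux_nil, shiftMon]
  | cons y l ih =>
      rw [wordExpAux_cons, wordExpAux_cons, shiftMon, Finsupp.mapDomain_add,
        Finsupp.mapDomain_single, ← shiftMon, ih,
        show n + 1 + k = n + k + 1 from by omega]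
      congr 1
      exact congrArg (fun p : Y × ℕ+ => Finsupp.single p (1 : ℕ))
        (Prod.ext rfl (PNat.coe_injective (by simp only [shiftVar, PNat.mk_coe]; omega)))

lemma wordExpAux_append (n : ℕ) (l₁ l₂ : List Y) :
    wordExpAux n (l₁ ++ l₂) = wordExpAux n l₁ + wordExpAux (n + l₁.length) l₂ := by
  induction l₁ generalizing n with
  | nil => simp [wordExpAux_nil]
  | cons y l ih =>
      rw [List.cons_append, wordExpAux_cons, wordExpAux_cons, ih,
        List.length_cons, show n + 1 + l.length = n + (l.length + 1) from by omega, add_assoc]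

lemma placeDeg_wordExpAux (n : ℕ) (l : List Y) :
    placeDeg (wordExpAux n l) = chiB n l.length := by
  induction l generalizing n with
  | nil => simp [wordExpAux_nil, placeDeg_zero, chiB_zero]
  | cons y l ih =>
      rw [wordExpAux_cons, placeDeg_add, placeDeg_single, ih, List.length_cons, chiB_succ']

lemma wordExp_def (w : FreeMonoid Y) : wordExp w = wordExpAux 0 (FreeMonoid.toList w) := rfl

lemma placeDeg_wordExp (w : FreeMonoid Y) :
    placeDeg (wordExp w) = chiB 0 (FreeMonoid.length w) := by
  rw [wordExp_def, placeDeg_wordExpAux]; rfl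

lemma wordExp_mul (u w : FreeMonoid Y) :
    wordExp (u * w) = wordExp u + shiftMon (FreeMonoid.length u) (wordExp w) := by
  rw [wordExp_def, wordExp_def, wordExp_def, FreeMonoid.toList_mul, wordExpAux_append,
    shiftMon_wordExpAux]
  rfl

lemma wordExpAux_apply_le (n : ℕ) (l : List Y) (y : Y) (j : ℕ+) (hj : (j : ℕ) ≤ n) :
    wordExpAux n l (y, j) = 0 := by
  induction l generalizing n with
  | nil => simp [wordExpAux_nil]
  | cons z l ih =>
      classical
      have hne : ¬ (((z, ⟨n + 1, n.succ_pos⟩) : Y × ℕ+) = (y, j)) := by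
        intro hzy
        erw [Prod.mk.injEq] at hzy
        have h5 : (n + 1 : ℕ) = (j : ℕ) := by rw [← hzy.2]; simp
        omega
      rw [wordExpAux_cons, Finsupp.add_apply, ih (n + 1) (by omega), add_zero,
        Finsupp.single_apply, if_neg hne]

lemma wordExpAux_inj {l l' : List Y} : ∀ {n : ℕ},
    wordExpAux n l = wordExpAux n l' → l = l' := by
  induction l generalizing l' with
  | nil =>
      intro n h
      cases l' with
      | nil => rfl
      | cons z l'' =>
          exfalso
          have := congrArg placeDeg h
          rw [placeDeg_wordExpAux, placeDeg_wordExpAux] at this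
          have := chiB_right_inj this
          simp at this
  | cons y l ih =>
      intro n h
      cases l' with
      | nil =>
          exfalso
          have := congrArg placeDeg h
          rw [placeDeg_wordExpAux, placeDeg_wordExpAux] at this
          have := chiB_right_inj this
          simp at this
      | cons z l'' =>
          have hy : y = z := by
            classical
            by_contra hzy
            have h1 : wordExpAux n (y :: l) ((y, ⟨n + 1, n.succ_pos⟩) : Y × ℕ+)
                = wordExpAux n (z :: l'') ((y, ⟨n + 1, n.succ_pos⟩) : Y × ℕ+) := by rw [h]
            have e1 : wordExpAux (n + 1) l ((y, ⟨n + 1, n.succ_pos⟩) : Y × ℕ+) = 0 :=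
              wordExpAux_apply_le (n + 1) l y _ (by simp)
            have e2 : wordExpAux (n + 1) l'' ((y, ⟨n + 1, n.succ_pos⟩) : Y × ℕ+) = 0 :=
              wordExpAux_apply_le (n + 1) l'' y _ (by simp)
            have hne2 : ¬ (((z, ⟨n + 1, n.succ_pos⟩) : Y × ℕ+) = ((y, ⟨n + 1, n.succ_pos⟩) : Y × ℕ+)) :=
              fun hc => hzy (congrArg Prod.fst hc).symm
            rw [wordExpAux_cons, wordExpAux_cons, Finsupp.add_apply, Finsupp.add_apply,
              e1, e2, add_zero, add_zero, Finsupp.single_apply, Finsupp.single_apply,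
              if_pos rfl, if_neg hne2] at h1
            exact one_ne_zero h1
          have h2 : wordExpAux (n + 1) l = wordExpAux (n + 1) l'' := by
            ext p
            have h3 : wordExpAux n (y :: l) p = wordExpAux n (z :: l'') p := by rw [h]
            rw [wordExpAux_cons, wordExpAux_cons, Finsupp.add_apply, Finsupp.add_apply] at h3
            have hsng : (Finsupp.single ((y, ⟨n + 1, n.succ_pos⟩) : Y × ℕ+) (1 : ℕ)) p
                = (Finsupp.single ((z, ⟨n + 1, n.succ_pos⟩) : Y × ℕ+) (1 : ℕ)) p := by rw [hy]
            omega
          rw [hy, ih h2]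

lemma wordExp_inj {u v : FreeMonoid Y} (h : wordExp u = wordExp v) : u = v := by
  have := wordExpAux_inj (l := FreeMonoid.toList u) (l' := FreeMonoid.toList v) (n := 0) h
  exact FreeMonoid.toList.injective this

/-! #### classification of multilinear monomials -/

lemma classify : ∀ (e : ℕ) {a : ℕ} {m : (Y × ℕ+) →₀ ℕ}, placeDeg m = chiB a e →
    ∃ l : List Y, l.length = e ∧ m = wordExpAux a l := by
  intro e
  induction e with
  | zero =>
      intro a m h
      refine ⟨[], rfl, ?_⟩
      have := placeDeg_eq_zero (h.trans (chiB_zero a))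
      rw [this, wordExpAux_nil]
  | succ e ih =>
      intro a m h
      classical
      have hdeg : placeDeg m (⟨a + 1, Nat.succ_pos a⟩ : ℕ+) = 1 := by
        erw [h, chiB_apply, PNat.mk_coe, if_pos (by omega)]
      set j₀ : ℕ+ := ⟨a + 1, Nat.succ_pos a⟩ with hj₀
      set s := m.support.filter (fun p => p.2 = j₀) with hs
      have hsum : ∑ p ∈ s, m p = 1 := by
        rw [placeDeg_apply] at hdeg
        rw [hs, Finset.sum_filter]
        exact hdeg
      have hcard : s.card ≤ 1 := by
        have h1 : s.card • 1 ≤ ∑ p ∈ s, m p :=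
          Finset.card_nsmul_le_sum s _ 1 (fun p hp =>
            Nat.one_le_iff_ne_zero.2
              (Finsupp.mem_support_iff.1 (Finset.mem_filter.1 hp).1))
        simpa [hsum] using h1
      have hnon : s.Nonempty := by
        by_contra hemp
        rw [Finset.not_nonempty_iff_eq_empty] at hemp
        rw [hemp] at hsum
        simp at hsum
      obtain ⟨p₀, hp₀⟩ := Finset.card_eq_one.1 (le_antisymm hcard hnon.card_pos)
      have hp₀s : p₀ ∈ s := by rw [hp₀]; exact Finset.mem_singleton_self _
      have hmp₀ : m p₀ = 1 := by
        rw [hp₀] at hsum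
        simpa using hsum
      have hp₀2 : p₀.2 = j₀ := by
        have := (Finset.mem_filter.1 hp₀s).2
        simpa using this
      have hdecomp : Finsupp.single p₀ 1 + m.erase p₀ = m := by
        conv_rhs => rw [← Finsupp.single_add_erase p₀ m]
        rw [hmp₀]
      have herase : placeDeg (m.erase p₀) = chiB (a + 1) e := by
        ext j
        have h2 := DFunLike.congr_fun (congrArg placeDeg hdecomp) j
        rw [placeDeg_add, placeDeg_single, hp₀2, Finsupp.add_apply] at h2
        have h3 := DFunLike.congr_fun h j
        have h4 : Finsupp.single j₀ 1 j + chiB (a + 1) e j = chiB a (e + 1) j := by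
          rw [← Finsupp.add_apply, hj₀, ← chiB_succ']
        omega
      obtain ⟨l', hl', hml'⟩ := ih herase
      refine ⟨p₀.1 :: l', by simp [hl'], ?_⟩
      rw [wordExpAux_cons, ← hml']
      conv_lhs => rw [← hdecomp]
      congr 1
      exact congrArg (fun p : Y × ℕ+ => Finsupp.single p (1 : ℕ))
        (Prod.ext rfl hp₀2)

/-! #### iota basics -/

lemma iota_apply (f : FA K Y) :
    iota K f = ∑ w ∈ f.coeff.support, MvPolynomial.monomial (wordExp w) (f.coeff w) := rfl

lemma iota_zero : iota K (0 : FA K Y) = 0 := by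
  rw [iota_apply]
  simp

lemma iota_single (w : FreeMonoid Y) (c : K) :
    iota K (MonoidAlgebra.single w c) = MvPolynomial.monomial (wordExp w) c := by
  unfold iota
  rw [MonoidAlgebra.coeff_single, Finsupp.sum_single_index]
  exact map_zero _

lemma iota_add (f g : FA K Y) : iota K (f + g) = iota K f + iota K g := by
  unfold iota
  rw [MonoidAlgebra.coeff_add, Finsupp.sum_add_index']
  · intro w
    exact map_zero _
  · intro w c₁ c₂
    exact map_add _ _ _

lemma iota_finset_sum {A : Type*} (s : Finset A) (g : A → FA K Y) :
    iota K (∑ a ∈ s, g a) = ∑ a ∈ s, iota K (g a) := by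
  classical
  induction s using Finset.cons_induction with
  | empty => simp [iota_zero]
  | cons a s ha ih => rw [Finset.sum_cons, Finset.sum_cons, iota_add, ih]

lemma coeff_iota (f : FA K Y) (w : FreeMonoid Y) :
    MvPolynomial.coeff (wordExp w) (iota K f) = f.coeff w := by
  classical
  rw [iota_apply, MvPolynomial.coeff_sum]
  by_cases hw : w ∈ f.coeff.support
  · rw [Finset.sum_eq_single_of_mem w hw]
    · rw [MvPolynomial.coeff_monomial, if_pos rfl]
    · intro w' _ hne
      rw [MvPolynomial.coeff_monomial, if_neg (fun hh => hne (wordExp_inj hh))]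
  · rw [Finsupp.notMem_support_iff.1 hw]
    exact Finset.sum_eq_zero (fun w' hw' => by
      rw [MvPolynomial.coeff_monomial,
        if_neg (fun hh => hw (by rw [← wordExp_inj hh]; exact hw'))])

lemma iota_injective : Function.Injective (iota K : FA K Y → PL K Y) := by
  intro f g h
  ext w
  rw [← coeff_iota f w, ← coeff_iota g w, h]

/-! #### mComp and IsMultiHomog -/

lemma coeff_mComp (μ : ℕ+ →₀ ℕ) (f : PL K Y) (n : (Y × ℕ+) →₀ ℕ) :
    MvPolynomial.coeff n (mComp K μ f) = if placeDeg n = μ then MvPolynomial.coeff n f else 0 := by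
  classical
  unfold mComp
  rw [MvPolynomial.coeff_sum]
  simp only [MvPolynomial.coeff_monomial]
  rw [Finset.sum_ite_eq' (f.support.filter fun m => placeDeg m = μ) n
    (fun m => MvPolynomial.coeff m f)]
  simp only [Finset.mem_filter, MvPolynomial.mem_support_iff]
  split_ifs with h1 h2 h2
  · rfl
  · exact absurd h1.2 h2
  · symm
    by_contra hc
    exact h1 ⟨hc, h2⟩
  · rfl

lemma mComp_zero (μ : ℕ+ →₀ ℕ) : mComp K μ (0 : PL K Y) = 0 := by
  apply MvPolynomial.ext
  intro n
  rw [coeff_mComp]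
  simp

lemma mComp_add (μ : ℕ+ →₀ ℕ) (f g : PL K Y) :
    mComp K μ (f + g) = mComp K μ f + mComp K μ g := by
  apply MvPolynomial.ext
  intro n
  rw [MvPolynomial.coeff_add, coeff_mComp, coeff_mComp, coeff_mComp, MvPolynomial.coeff_add]
  split_ifs <;> simp

lemma mComp_finset_sum {A : Type*} (μ : ℕ+ →₀ ℕ) (s : Finset A) (g : A → PL K Y) :
    mComp K μ (∑ a ∈ s, g a) = ∑ a ∈ s, mComp K μ (g a) := by
  classical
  induction s using Finset.cons_induction with
  | empty => simp [mComp_zero]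
  | cons a s ha ih => rw [Finset.sum_cons, Finset.sum_cons, mComp_add, ih]

lemma isMultiHomog_monomial (m : (Y × ℕ+) →₀ ℕ) (c : K) :
    IsMultiHomog K (placeDeg m) (MvPolynomial.monomial m c) := by
  intro m' hm'
  classical
  by_cases hc : c = 0
  · rw [MvPolynomial.support_monomial, if_pos hc] at hm'
    exact absurd hm' (Finset.notMem_empty _)
  · rw [MvPolynomial.support_monomial, if_neg hc, Finset.mem_singleton] at hm'
    rw [hm']

lemma isMultiHomog_sum {A : Type*} (s : Finset A) (g : A → PL K Y) (μ : ℕ+ →₀ ℕ)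
    (h : ∀ a ∈ s, IsMultiHomog K μ (g a)) : IsMultiHomog K μ (∑ a ∈ s, g a) := by
  classical
  intro m hm
  obtain ⟨a, ha, hma⟩ := Finset.mem_biUnion.1 (MvPolynomial.support_sum hm)
  exact h a ha m hma

lemma mComp_of_eq {μ : ℕ+ →₀ ℕ} {f : PL K Y} (h : IsMultiHomog K μ f) : mComp K μ f = f := by
  apply MvPolynomial.ext
  intro n
  rw [coeff_mComp]
  by_cases hn : n ∈ f.support
  · rw [if_pos (h n hn)]
  · rw [MvPolynomial.notMem_support_iff.1 hn]
    split_ifs <;> rfl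

lemma mComp_of_ne {μ ν : ℕ+ →₀ ℕ} {f : PL K Y} (h : IsMultiHomog K ν f) (hne : ν ≠ μ) :
    mComp K μ f = 0 := by
  apply MvPolynomial.ext
  intro n
  rw [coeff_mComp, MvPolynomial.coeff_zero]
  by_cases hn : n ∈ f.support
  · rw [if_neg (fun hc => hne ((h n hn).symm.trans hc))]
  · rw [MvPolynomial.notMem_support_iff.1 hn]
    split_ifs <;> rfl

lemma isMultiHomog_monomial_mul {ν : ℕ+ →₀ ℕ} {f : PL K Y} (h : IsMultiHomog K ν f)
    (m : (Y × ℕ+) →₀ ℕ) (c : K) :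
    IsMultiHomog K (placeDeg m + ν) (MvPolynomial.monomial m c * f) := by
  intro n hn
  have hc := MvPolynomial.mem_support_iff.1 hn
  rw [MvPolynomial.coeff_monomial_mul'] at hc
  by_cases hle : m ≤ n
  · rw [if_pos hle] at hc
    have h2 : MvPolynomial.coeff (n - m) f ≠ 0 := by
      intro h0
      rw [h0, mul_zero] at hc
      exact hc rfl
    have h3 : placeDeg (n - m) = ν := h (n - m) (MvPolynomial.mem_support_iff.2 h2)
    have h4 : m + (n - m) = n := add_tsub_cancel_of_le hle
    rw [← h4, placeDeg_add, h3]
  · rw [if_neg hle] at hc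
    exact absurd rfl hc

lemma mComp_monomial_mul (m : (Y × ℕ+) →₀ ℕ) (c : K) (f : PL K Y) (μ : ℕ+ →₀ ℕ) :
    mComp K (placeDeg m + μ) (MvPolynomial.monomial m c * f)
      = MvPolynomial.monomial m c * mComp K μ f := by
  apply MvPolynomial.ext
  intro n
  rw [coeff_mComp, MvPolynomial.coeff_monomial_mul', MvPolynomial.coeff_monomial_mul', coeff_mComp]
  by_cases hle : m ≤ n
  · rw [if_pos hle, if_pos hle]
    have h4 : placeDeg n = placeDeg m + placeDeg (n - m) := by
      conv_lhs => rw [← add_tsub_cancel_of_le hle]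
      rw [placeDeg_add]
    by_cases hd : placeDeg (n - m) = μ
    · rw [if_pos hd, if_pos (by rw [h4, hd])]
    · have hcan : placeDeg n = placeDeg m + μ → placeDeg (n - m) = μ := by
        intro hc
        have h5 := h4.symm.trans hc
        ext j
        have h6 := DFunLike.congr_fun h5 j
        rw [Finsupp.add_apply, Finsupp.add_apply] at h6
        omega
      rw [if_neg hd, if_neg (fun hc => hd (hcan hc)), mul_zero]
  · rw [if_neg hle, if_neg hle]
    split_ifs <;> rfl

lemma mComp_monomial_mul_of_not_le (m : (Y × ℕ+) →₀ ℕ) (c : K) (f : PL K Y) {μ : ℕ+ →₀ ℕ}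
    (hle : ¬ placeDeg m ≤ μ) : mComp K μ (MvPolynomial.monomial m c * f) = 0 := by
  apply MvPolynomial.ext
  intro n
  rw [coeff_mComp, MvPolynomial.coeff_monomial_mul', MvPolynomial.coeff_zero]
  by_cases hd : placeDeg n = μ
  · rw [if_pos hd]
    by_cases hmn : m ≤ n
    · exfalso
      apply hle
      rw [← hd]
      conv_rhs => rw [← add_tsub_cancel_of_le hmn]
      rw [placeDeg_add]
      exact le_self_add
    · rw [if_neg hmn]
  · rw [if_neg hd]

/-! #### shift and iota -/

lemma shift_monomial (k : ℕ) (m : (Y × ℕ+) →₀ ℕ) (c : K) :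
    shift K k (MvPolynomial.monomial m c) = MvPolynomial.monomial (shiftMon k m) c :=
  MvPolynomial.rename_monomial _ _ _

lemma shift_iota (k : ℕ) (f : FA K Y) :
    shift K k (iota K f) = ∑ w ∈ f.coeff.support, MvPolynomial.monomial (shiftMon k (wordExp w)) (f.coeff w) := by
  rw [iota_apply, map_sum]
  exact Finset.sum_congr rfl fun w _ => shift_monomial k _ _

lemma length_toList (w : FreeMonoid Y) : (FreeMonoid.toList w).length = FreeMonoid.length w := rfl

lemma placeDeg_shiftMon_wordExp (k : ℕ) (w : FreeMonoid Y) :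
    placeDeg (shiftMon k (wordExp w)) = chiB k (FreeMonoid.length w) := by
  rw [wordExp_def, shiftMon_wordExpAux, placeDeg_wordExpAux, length_toList, zero_add]

lemma isMultiHomog_shift_iota {e k : ℕ} {f : FA K Y} (h : IsHomog K e f) :
    IsMultiHomog K (chiB k e) (shift K k (iota K f)) := by
  rw [shift_iota]
  apply isMultiHomog_sum
  intro w hw
  have h2 : placeDeg (shiftMon k (wordExp w)) = chiB k e := by
    rw [placeDeg_shiftMon_wordExp, h w hw]
  rw [← h2]
  exact isMultiHomog_monomial _ _

lemma isMultiHomog_iota {e : ℕ} {f : FA K Y} (h : IsHomog K e f) :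
    IsMultiHomog K (chiB 0 e) (iota K f) := by
  have := isMultiHomog_shift_iota (k := 0) h
  rwa [shift_zero] at this

lemma isMultiHomog_shift {μ : ℕ+ →₀ ℕ} {f : PL K Y} (h : IsMultiHomog K μ f) (k : ℕ) :
    ∃ μ', IsMultiHomog K μ' (shift K k f) := by
  classical
  refine ⟨Finsupp.mapDomain (fun j : ℕ+ => (⟨j + k, Nat.add_pos_left j.2 k⟩ : ℕ+)) μ, ?_⟩
  have hrw : shift K k f
      = ∑ m ∈ f.support, MvPolynomial.monomial (shiftMon k m) (MvPolynomial.coeff m f) := by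
    conv_lhs => rw [← MvPolynomial.support_sum_monomial_coeff f]
    rw [map_sum]
    exact Finset.sum_congr rfl fun m _ => shift_monomial k _ _
  rw [hrw]
  apply isMultiHomog_sum
  intro m hm
  have h2 : placeDeg (shiftMon k m)
      = Finsupp.mapDomain (fun j : ℕ+ => (⟨j + k, Nat.add_pos_left j.2 k⟩ : ℕ+)) μ := by
    rw [← h m hm]
    show Finsupp.mapDomain Prod.snd (Finsupp.mapDomain (shiftVar k) m)
        = Finsupp.mapDomain (fun j : ℕ+ => (⟨j + k, Nat.add_pos_left j.2 k⟩ : ℕ+))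
            (Finsupp.mapDomain Prod.snd m)
    rw [← Finsupp.mapDomain_comp, ← Finsupp.mapDomain_comp]
    rfl
  erw [← h2]
  exact isMultiHomog_monomial _ _

/-! #### multigradedness of spans of multihomogeneous elements -/

lemma mComp_mem_span {T : Set (PL K Y)} (hT : ∀ t ∈ T, ∃ ν, IsMultiHomog K ν t)
    {f : PL K Y} (hf : f ∈ Ideal.span T) (μ : ℕ+ →₀ ℕ) : mComp K μ f ∈ Ideal.span T := by
  classical
  obtain ⟨c, hsupp, hrep⟩ := Submodule.mem_span_set.1 hf
  rw [← hrep, Finsupp.sum, mComp_finset_sum]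
  apply Ideal.sum_mem
  intro t ht
  have htT : t ∈ T := hsupp ht
  obtain ⟨ν, hν⟩ := hT t htT
  rw [smul_eq_mul,
    show (c t : PL K Y) * t
        = ∑ m ∈ (c t).support, MvPolynomial.monomial m (MvPolynomial.coeff m (c t)) * t from by
      rw [← Finset.sum_mul, MvPolynomial.support_sum_monomial_coeff],
    mComp_finset_sum]
  apply Ideal.sum_mem
  intro m _
  have hmh := isMultiHomog_monomial_mul (K := K) hν m (MvPolynomial.coeff m (c t))
  by_cases heq : placeDeg m + ν = μ
  · rw [mComp_of_eq (heq ▸ hmh)]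
    exact Ideal.mul_mem_left _ _ (Ideal.subset_span htT)
  · rw [mComp_of_ne hmh heq]
    exact Ideal.zero_mem _

/-! #### homComp basics -/

lemma homComp_apply (d : ℕ) (f : FA K Y) (w : FreeMonoid Y) :
    (homComp K d f).coeff w = if FreeMonoid.length w = d then f.coeff w else 0 := by
  classical
  unfold homComp
  rw [MonoidAlgebra.coeff_sum, Finsupp.finset_sum_apply]
  simp only [MonoidAlgebra.single_apply]
  rw [Finset.sum_ite_eq' (f.coeff.support.filter fun w' => FreeMonoid.length w' = d) w (fun w' => f.coeff w')]
  simp only [Finset.mem_filter, Finsupp.mem_support_iff]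
  split_ifs with h1 h2 h2
  · rfl
  · exact absurd h1.2 h2
  · symm
    by_contra hc
    exact h1 ⟨hc, h2⟩
  · rfl

lemma isHomog_homComp (d : ℕ) (f : FA K Y) : IsHomog K d (homComp K d f) := by
  intro w hw
  have h1 := Finsupp.mem_support_iff.1 hw
  rw [homComp_apply] at h1
  by_cases h : FreeMonoid.length w = d
  · exact h
  · rw [if_neg h] at h1
    exact absurd rfl h1

lemma sum_homComp (f : FA K Y) :
    f = ∑ d ∈ Finset.range (degF K f + 1), homComp K d f := by
  classical
  ext w
  rw [MonoidAlgebra.coeff_sum, Finsupp.finset_sum_apply, Finset.sum_congr rfl (fun d _ => homComp_apply d f w)]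
  rw [Finset.sum_ite_eq (Finset.range (degF K f + 1)) (FreeMonoid.length w) (fun _ => f.coeff w)]
  by_cases hw : w ∈ f.coeff.support
  · have hlt : FreeMonoid.length w ∈ Finset.range (degF K f + 1) := by
      rw [Finset.mem_range]
      have h2 : FreeMonoid.length w ≤ degF K f := Finset.le_sup hw
      omega
    rw [if_pos hlt]
  · rw [Finsupp.notMem_support_iff.1 hw]
    split_ifs <;> rfl

lemma iota_homComp (d : ℕ) (f : FA K Y) :
    iota K (homComp K d f) = mComp K (chiB 0 d) (iota K f) := by
  classical
  have hterm : ∀ w : FreeMonoid Y, mComp K (chiB 0 d) (MvPolynomial.monomial (wordExp w) (f.coeff w))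
      = if FreeMonoid.length w = d then MvPolynomial.monomial (wordExp w) (f.coeff w) else 0 := by
    intro w
    by_cases h : FreeMonoid.length w = d
    · rw [if_pos h, mComp_of_eq]
      have h2 := isMultiHomog_monomial (wordExp w) (f.coeff w)
      rwa [placeDeg_wordExp, h] at h2
    · rw [if_neg h]
      refine mComp_of_ne (ν := placeDeg (wordExp w)) (isMultiHomog_monomial (wordExp w) (f.coeff w)) ?_
      rw [placeDeg_wordExp]
      exact fun hc => h (chiB_right_inj hc)
  rw [iota_apply f, mComp_finset_sum, Finset.sum_congr rfl (fun w _ => hterm w),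
    ← Finset.sum_filter]
  unfold homComp
  rw [iota_finset_sum]
  exact Finset.sum_congr rfl (fun w _ => iota_single w (f.coeff w))

/-! #### the core membership lemma -/

lemma image_sum_mem (I : TwoSidedIdeal (FA K Y)) {A : Type*} (s : Finset A) (g : A → PL K Y)
    (h : ∀ a ∈ s, g a ∈ iota K '' (I : Set (FA K Y))) :
    (∑ a ∈ s, g a) ∈ iota K '' (I : Set (FA K Y)) := by
  classical
  induction s using Finset.cons_induction with
  | empty => exact ⟨0, I.zero_mem, by rw [iota_zero]; rfl⟩
  | cons a s ha ih =>
      rw [Finset.sum_cons]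
      obtain ⟨x, hx, hxe⟩ := h a (Finset.mem_cons_self a s)
      obtain ⟨y, hy, hye⟩ := ih (fun b hb => h b (Finset.mem_cons_of_mem hb))
      exact ⟨x + y, I.add_mem hx hy, by rw [iota_add, hxe, hye]⟩

lemma core_mem {I : TwoSidedIdeal (FA K Y)} {f : FA K Y} (hfI : f ∈ I) {e : ℕ}
    (hf : IsHomog K e f) (m : (Y × ℕ+) →₀ ℕ) (c : K) (k d : ℕ)
    (hm : placeDeg m + chiB k e = chiB 0 d) :
    MvPolynomial.monomial m c * shift K k (iota K f) ∈ iota K '' (I : Set (FA K Y)) := by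
  classical
  by_cases he : e = 0
  · subst he
    have hm0 : placeDeg m = chiB 0 d := by
      rw [chiB_zero, add_zero] at hm
      exact hm
    obtain ⟨l, hl, hml⟩ := classify d hm0
    have hf1 : f = MonoidAlgebra.single (1 : FreeMonoid Y) (f.coeff 1) := by
      ext w
      by_cases hw : w = 1
      · subst hw
        rw [MonoidAlgebra.single_apply, if_pos rfl]
      · have hns : w ∉ f.coeff.support := fun hw' => hw (by
          have hl0 := hf w hw'
          exact FreeMonoid.toList.injective (List.length_eq_zero_iff.1 hl0))
        rw [Finsupp.notMem_support_iff.1 hns, MonoidAlgebra.single_apply,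
          if_neg (fun hc => hw hc.symm)]
    refine ⟨MonoidAlgebra.single (FreeMonoid.ofList l) c * f,
      I.mul_mem_left _ _ hfI, ?_⟩
    conv_lhs => rw [hf1]
    rw [MonoidAlgebra.single_mul_single, mul_one, iota_single]
    conv_rhs => rw [hf1]
    rw [iota_single, shift_monomial, MvPolynomial.monomial_mul]
    rw [show shiftMon k (wordExp (1 : FreeMonoid Y)) = 0 from Finsupp.mapDomain_zero]
    rw [add_zero]
    exact congrArg (fun n => MvPolynomial.monomial n (c * f.coeff 1)) hml.symm
  · have he' : 0 < e := Nat.pos_of_ne_zero he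
    have hle : chiB k e ≤ chiB 0 d := by
      rw [← hm]
      exact le_add_self
    have hked : k + e ≤ d := by
      have h2 := (Finsupp.le_def.1 hle) ⟨k + e, by omega⟩
      erw [chiB_apply, chiB_apply, PNat.mk_coe] at h2
      split_ifs at h2 <;> omega
    set r := d - (k + e) with hr
    have hsplit : chiB 0 d = chiB 0 k + chiB k e + chiB (k + e) r := by
      rw [show d = k + (e + r) from by omega, chiB_split, chiB_split, ← add_assoc, zero_add]
    have hpm : placeDeg m = chiB 0 k + chiB (k + e) r := by
      ext j
      have h1 := DFunLike.congr_fun hm j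
      have h2 := DFunLike.congr_fun hsplit j
      simp only [Finsupp.add_apply] at h1 h2 ⊢
      omega
    set m₁ := m.filter (fun p : Y × ℕ+ => (p.2 : ℕ) ≤ k) with hm₁
    set m₂ := m.filter (fun p : Y × ℕ+ => ¬ (p.2 : ℕ) ≤ k) with hm₂
    have hm12 : m₁ + m₂ = m := Finsupp.filter_pos_add_filter_neg m _
    have hpd1 : ∀ j : ℕ+, ¬ (j : ℕ) ≤ k → placeDeg m₁ j = 0 := by
      intro j hj
      rw [placeDeg_apply]
      apply Finset.sum_eq_zero
      intro p hp
      have hps := Finsupp.mem_support_iff.1 hp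
      rw [hm₁, Finsupp.filter_apply] at hps
      by_cases hpk : (p.2 : ℕ) ≤ k
      · exact if_neg (fun hc : p.2 = j => hj (hc ▸ hpk))
      · rw [if_neg hpk] at hps
        exact absurd rfl hps
    have hpd2 : ∀ j : ℕ+, (j : ℕ) ≤ k → placeDeg m₂ j = 0 := by
      intro j hj
      rw [placeDeg_apply]
      apply Finset.sum_eq_zero
      intro p hp
      have hps := Finsupp.mem_support_iff.1 hp
      rw [hm₂, Finsupp.filter_apply] at hps
      by_cases hpk : ¬ (p.2 : ℕ) ≤ k
      · exact if_neg (fun hc : p.2 = j => hpk (hc ▸ hj))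
      · rw [if_neg hpk] at hps
        exact absurd rfl hps
    have hadd : ∀ j : ℕ+, placeDeg m₁ j + placeDeg m₂ j = placeDeg m j := by
      intro j
      rw [← Finsupp.add_apply, ← placeDeg_add, hm12]
    have hpm1 : placeDeg m₁ = chiB 0 k := by
      ext j
      have hmj := DFunLike.congr_fun hpm j
      rw [Finsupp.add_apply] at hmj
      have haj := hadd j
      by_cases hjk : (j : ℕ) ≤ k
      · have h0 := hpd2 j hjk
        have hc2 : chiB (k + e) r j = 0 := by
          rw [chiB_apply, if_neg (by omega)]
        omega
      · have h0 := hpd1 j hjk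
        have hc1 : chiB 0 k j = 0 := by
          rw [chiB_apply, if_neg (by omega)]
        omega
    have hpm2 : placeDeg m₂ = chiB (k + e) r := by
      ext j
      have hmj := DFunLike.congr_fun hpm j
      rw [Finsupp.add_apply] at hmj
      have haj := hadd j
      have h1j := DFunLike.congr_fun hpm1 j
      omega
    obtain ⟨lu, hlu, hmlu⟩ := classify k hpm1
    obtain ⟨lv, hlv, hmlv⟩ := classify r hpm2
    set u := FreeMonoid.ofList lu with hu
    set v := FreeMonoid.ofList lv with hv
    have hlenu : FreeMonoid.length u = k := by rw [← hlu]; rfl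
    have hT : ∀ (w : FreeMonoid Y) (cw : K),
        iota K (MonoidAlgebra.single u c * MonoidAlgebra.single w cw * MonoidAlgebra.single v 1)
          = MvPolynomial.monomial (wordExp u + shiftMon (FreeMonoid.length u) (wordExp w)
              + shiftMon (FreeMonoid.length u + FreeMonoid.length w) (wordExp v)) (c * cw) := by
      intro w cw
      rw [MonoidAlgebra.single_mul_single, MonoidAlgebra.single_mul_single, mul_one, iota_single,
        wordExp_mul, wordExp_mul, FreeMonoid.length_mul]
    let T : FA K Y →+ PL K Y :=
      { toFun := fun g => iota K (MonoidAlgebra.single u c * g * MonoidAlgebra.single v 1)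
        map_zero' := by
          show iota K (MonoidAlgebra.single u c * 0 * MonoidAlgebra.single v 1) = 0
          rw [mul_zero, zero_mul, iota_zero]
        map_add' := fun a b => by
          show iota K (MonoidAlgebra.single u c * (a + b) * MonoidAlgebra.single v 1) = _
          simp only [mul_add, add_mul, iota_add] }
    have hL : iota K (MonoidAlgebra.single u c * f * MonoidAlgebra.single v 1)
        = ∑ w ∈ f.coeff.support, MvPolynomial.monomial
            (wordExp u + shiftMon k (wordExp w) + shiftMon (k + e) (wordExp v)) (c * f.coeff w) := by
      have h1 : iota K (MonoidAlgebra.single u c * f * MonoidAlgebra.single v 1) = T f := rfl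
      rw [h1]
      conv_lhs => rw [← MonoidAlgebra.sum_coeff_single f]
      rw [map_finsuppSum]
      rw [show (Finsupp.sum f.coeff fun w cw => T (MonoidAlgebra.single w cw))
          = ∑ w ∈ f.coeff.support, T (MonoidAlgebra.single w (f.coeff w)) from rfl]
      refine Finset.sum_congr rfl fun w hw => ?_
      rw [show T (MonoidAlgebra.single w (f.coeff w)) = iota K (MonoidAlgebra.single u c *
        MonoidAlgebra.single w (f.coeff w) * MonoidAlgebra.single v 1) from rfl, hT, hlenu, hf w hw]
    have hR : MvPolynomial.monomial m c * shift K k (iota K f)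
        = ∑ w ∈ f.coeff.support, MvPolynomial.monomial (m + shiftMon k (wordExp w)) (c * f.coeff w) := by
      rw [shift_iota, Finset.mul_sum]
      exact Finset.sum_congr rfl fun w _ => by rw [MvPolynomial.monomial_mul]
    refine ⟨MonoidAlgebra.single u c * f * MonoidAlgebra.single v 1,
      I.mul_mem_right _ _ (I.mul_mem_left _ _ hfI), ?_⟩
    rw [hL, hR]
    refine Finset.sum_congr rfl fun w hw => ?_
    congr 1
    have hwu : (wordExpAux 0 lu : (Y × ℕ+) →₀ ℕ) = wordExp u := rfl
    have hwv : wordExpAux (k + e) lv = shiftMon (k + e) (wordExp v) := by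
      rw [show wordExp v = wordExpAux 0 lv from rfl, shiftMon_wordExpAux, zero_add]
    conv_rhs => rw [← hm12, hmlu, hmlv, hwu, hwv]
    rw [add_right_comm]

/-! #### Lemma D1: multilinear components of products lie in the image -/

lemma mComp_mul_shift_iota_mem {I : TwoSidedIdeal (FA K Y)} {f : FA K Y} (hfI : f ∈ I)
    {e : ℕ} (hf : IsHomog K e f) (r : PL K Y) (k d : ℕ) :
    mComp K (chiB 0 d) (r * shift K k (iota K f)) ∈ iota K '' (I : Set (FA K Y)) := by
  classical
  have himg_zero : (0 : PL K Y) ∈ iota K '' (I : Set (FA K Y)) :=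
    ⟨0, I.zero_mem, by rw [iota_zero]⟩
  rw [show r * shift K k (iota K f)
      = ∑ m ∈ r.support, MvPolynomial.monomial m (MvPolynomial.coeff m r) * shift K k (iota K f)
      from by rw [← Finset.sum_mul, MvPolynomial.support_sum_monomial_coeff]]
  rw [mComp_finset_sum]
  apply image_sum_mem
  intro m _
  have ht := isMultiHomog_shift_iota (k := k) hf
  have hprod := isMultiHomog_monomial_mul (K := K) ht m (MvPolynomial.coeff m r)
  by_cases heq : placeDeg m + chiB k e = chiB 0 d
  · rw [mComp_of_eq (heq ▸ hprod)]
    exact core_mem hfI hf m _ k d heq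
  · rw [mComp_of_ne hprod heq]
    exact himg_zero

/-! #### assembly -/

lemma nspan_iota_eq_spanT' (I : TwoSidedIdeal (FA K Y)) (hI : IsGradedF K I) :
    nspan K (iota K '' (I : Set (FA K Y)))
      = Ideal.span {g | ∃ (k e : ℕ) (f : FA K Y),
          f ∈ I ∧ IsHomog K e f ∧ g = shift K k (iota K f)} := by
  apply le_antisymm
  · refine Ideal.span_le.2 ?_
    rintro g ⟨k, p, ⟨f, hfI, rfl⟩, rfl⟩
    have hdec : shift K k (iota K f)
        = ∑ d ∈ Finset.range (degF K f + 1), shift K k (iota K (homComp K d f)) := by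
      conv_lhs => rw [sum_homComp (K := K) f]
      rw [iota_finset_sum, map_sum]
    rw [hdec]
    apply Ideal.sum_mem
    intro d _
    exact Ideal.subset_span ⟨k, d, homComp K d f, hI f hfI d, isHomog_homComp d f, rfl⟩
  · refine Ideal.span_le.2 ?_
    rintro g ⟨k, e, f, hfI, _, rfl⟩
    exact shift_mem_nspan k ⟨f, hfI, rfl⟩

lemma preimage_eq (I : TwoSidedIdeal (FA K Y)) (hI : IsGradedF K I) :
    iota K ⁻¹' ((nspan K (iota K '' (I : Set (FA K Y))) : Set (PL K Y)) ∩
      Set.range (iota K)) = (I : Set (FA K Y)) := by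
  classical
  ext f
  simp only [Set.mem_preimage, Set.mem_inter_iff, Set.mem_range, SetLike.mem_coe]
  constructor
  · rintro ⟨hfJ, -⟩
    rw [nspan_iota_eq_spanT' I hI] at hfJ
    have hmem : ∀ d, homComp K d f ∈ I := by
      intro d
      have h1 : mComp K (chiB 0 d) (iota K f) ∈ iota K '' (I : Set (FA K Y)) := by
        obtain ⟨c, hsupp, hrep⟩ := Submodule.mem_span_set.1 hfJ
        rw [← hrep,
          show (c.sum fun mi r => r • mi) = ∑ t ∈ c.support, c t • t from rfl,
          mComp_finset_sum]
        apply image_sum_mem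
        intro t ht
        obtain ⟨k, e, g, hgI, hgh, hgt⟩ := hsupp ht
        rw [smul_eq_mul]
        have h2 := mComp_mul_shift_iota_mem hgI hgh (c t) k d
        rwa [← hgt] at h2
      obtain ⟨g, hgI, hge⟩ := h1
      rw [← iota_homComp] at hge
      rw [← iota_injective hge]
      exact hgI
    rw [sum_homComp (K := K) f]
    exact I.finsetSum_mem _ _ (fun d _ => hmem d)
  · intro hfI
    exact ⟨mem_nspan_self ⟨f, hfI, rfl⟩, f, rfl⟩

lemma lp_multigraded {J : Ideal (PL K Y)} (hJ : IsLPIdeal K J) :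
    ∀ f ∈ J, ∀ μ, mComp K μ f ∈ J := by
  intro f hf μ
  have h2 := hJ.2
  rw [h2] at hf ⊢
  refine mComp_mem_span ?_ hf μ
  rintro t ⟨k, g, ⟨hgJ, hgL⟩, rfl⟩
  obtain ⟨-, μ₀, hμ₀⟩ := hgL
  exact isMultiHomog_shift hμ₀ k

lemma part1 (I : TwoSidedIdeal (FA K Y)) (hI : IsGradedF K I) :
    IsLPIdeal K (nspan K (iota K '' (I : Set (FA K Y)))) := by
  constructor
  · exact nspan_isNIdeal _
  · apply le_antisymm
    · refine le_trans (le_of_eq (nspan_iota_eq_spanT' I hI)) (Ideal.span_le.2 ?_)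
      rintro g ⟨k, e, f, hfI, hfh, rfl⟩
      have hgJ : iota K f ∈ nspan K (iota K '' (I : Set (FA K Y))) :=
        mem_nspan_self ⟨f, hfI, rfl⟩
      have hgL : iota K f ∈ Lset K := ⟨⟨f, rfl⟩, chiB 0 e, isMultiHomog_iota hfh⟩
      exact shift_mem_nspan k ⟨hgJ, hgL⟩
    · exact nspan_le Set.inter_subset_left (nspan_isNIdeal _)

lemma part4 {J : Ideal (PL K Y)} (hJ : IsLPIdeal K J) :
    nspan K (iota K '' (iota K ⁻¹' ((J : Set (PL K Y)) ∩ Set.range (iota K)))) = J := by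
  have himg : iota K '' (iota K ⁻¹' ((J : Set (PL K Y)) ∩ Set.range (iota K)))
      = (J : Set (PL K Y)) ∩ Set.range (iota K) := by
    rw [Set.image_preimage_eq_inter_range, Set.inter_assoc, Set.inter_self]
  rw [himg]
  apply le_antisymm
  · exact nspan_le Set.inter_subset_left hJ.1
  · conv_lhs => rw [hJ.2]
    apply nspan_mono
    rintro p ⟨hpJ, hpL⟩
    exact ⟨hpJ, hpL.1⟩

lemma part2 {J : Ideal (PL K Y)} (hJ : IsLPIdeal K J) :
    ∃ I : TwoSidedIdeal (FA K Y),
      (I : Set (FA K Y)) = iota K ⁻¹' ((J : Set (PL K Y)) ∩ Set.range (iota K)) ∧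
      IsGradedF K I := by
  classical
  have hmg := lp_multigraded hJ
  have hN : IsNIdeal K J := hJ.1
  have hmull : ∀ (g f : FA K Y), iota K f ∈ J → iota K (g * f) ∈ J := by
    intro g f hf
    have hdec : g * f = ∑ u ∈ g.coeff.support, MonoidAlgebra.single u (g.coeff u) * f := by
      rw [← Finset.sum_mul]
      congr 1
      conv_lhs => rw [← MonoidAlgebra.sum_coeff_single g]
      rfl
    rw [hdec, iota_finset_sum]
    apply Ideal.sum_mem
    intro u _
    have hkey : iota K (MonoidAlgebra.single u (g.coeff u) * f)
        = MvPolynomial.monomial (wordExp u) (g.coeff u) * shift K (FreeMonoid.length u) (iota K f) := by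
      let T1 : FA K Y →+ PL K Y :=
        { toFun := fun h => iota K (MonoidAlgebra.single u (g.coeff u) * h)
          map_zero' := by
            show iota K (MonoidAlgebra.single u (g.coeff u) * 0) = 0
            rw [mul_zero, iota_zero]
          map_add' := fun a b => by
            show iota K (MonoidAlgebra.single u (g.coeff u) * (a + b)) = _
            simp only [mul_add, iota_add] }
      have h1 : iota K (MonoidAlgebra.single u (g.coeff u) * f) = T1 f := rfl
      rw [h1]
      conv_lhs => rw [← MonoidAlgebra.sum_coeff_single f]
      rw [map_finsuppSum,
        show (Finsupp.sum f.coeff fun w cw => T1 (MonoidAlgebra.single w cw))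
          = ∑ w ∈ f.coeff.support, T1 (MonoidAlgebra.single w (f.coeff w)) from rfl,
        shift_iota, Finset.mul_sum]
      refine Finset.sum_congr rfl fun w _ => ?_
      rw [show T1 (MonoidAlgebra.single w (f.coeff w))
          = iota K (MonoidAlgebra.single u (g.coeff u) * MonoidAlgebra.single w (f.coeff w)) from rfl,
        MonoidAlgebra.single_mul_single, iota_single, wordExp_mul, MvPolynomial.monomial_mul]
    rw [hkey]
    exact Ideal.mul_mem_left _ _ (hN (FreeMonoid.length u) _ hf)
  have hmulr : ∀ (f g : FA K Y), iota K f ∈ J → iota K (f * g) ∈ J := by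
    intro f g hf
    have hdec : f * g = ∑ d ∈ Finset.range (degF K f + 1), homComp K d f * g := by
      conv_lhs => rw [sum_homComp (K := K) f]
      rw [Finset.sum_mul]
    rw [hdec, iota_finset_sum]
    apply Ideal.sum_mem
    intro d _
    have hfd : iota K (homComp K d f) ∈ J := by
      rw [iota_homComp]
      exact hmg _ hf _
    have hdec2 : homComp K d f * g
        = ∑ u ∈ g.coeff.support, homComp K d f * MonoidAlgebra.single u (g.coeff u) := by
      rw [← Finset.mul_sum]
      congr 1
      conv_lhs => rw [← MonoidAlgebra.sum_coeff_single g]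
      rfl
    rw [hdec2, iota_finset_sum]
    apply Ideal.sum_mem
    intro u _
    have hkey : iota K (homComp K d f * MonoidAlgebra.single u (g.coeff u))
        = iota K (homComp K d f) * MvPolynomial.monomial (shiftMon d (wordExp u)) (g.coeff u) := by
      let T2 : FA K Y →+ PL K Y :=
        { toFun := fun h => iota K (h * MonoidAlgebra.single u (g.coeff u))
          map_zero' := by
            show iota K (0 * MonoidAlgebra.single u (g.coeff u)) = 0
            rw [zero_mul, iota_zero]
          map_add' := fun a b => by
            show iota K ((a + b) * MonoidAlgebra.single u (g.coeff u)) = _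
            simp only [add_mul, iota_add] }
      have h1 : iota K (homComp K d f * MonoidAlgebra.single u (g.coeff u)) = T2 (homComp K d f) := rfl
      rw [h1]
      conv_lhs => rw [← MonoidAlgebra.sum_coeff_single (homComp K d f)]
      rw [map_finsuppSum,
        show (Finsupp.sum (homComp K d f).coeff fun w cw => T2 (MonoidAlgebra.single w cw))
          = ∑ w ∈ (homComp K d f).coeff.support, T2 (MonoidAlgebra.single w ((homComp K d f).coeff w))
          from rfl,
        iota_apply, Finset.sum_mul]
      refine Finset.sum_congr rfl fun w hw => ?_
      rw [show T2 (MonoidAlgebra.single w ((homComp K d f).coeff w))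
          = iota K (MonoidAlgebra.single w ((homComp K d f).coeff w) * MonoidAlgebra.single u (g.coeff u))
          from rfl,
        MonoidAlgebra.single_mul_single, iota_single, wordExp_mul, MvPolynomial.monomial_mul,
        isHomog_homComp d f w hw]
    rw [hkey]
    exact Ideal.mul_mem_right _ _ hfd
  refine ⟨TwoSidedIdeal.mk' {f : FA K Y | iota K f ∈ J}
    (by show iota K 0 ∈ J; rw [iota_zero]; exact J.zero_mem)
    (fun {a b} ha hb => by show iota K (a + b) ∈ J; rw [iota_add]; exact J.add_mem ha hb)
    (fun {a} ha => by
      show iota K (-a) ∈ J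
      have h0 : iota K a + iota K (-a) = 0 := by
        rw [← iota_add, add_neg_cancel, iota_zero]
      rw [eq_neg_of_add_eq_zero_right h0]
      exact neg_mem ha)
    (fun {x y} hy => by show iota K (x * y) ∈ J; exact hmull x y hy)
    (fun {x y} hx => by show iota K (x * y) ∈ J; exact hmulr x y hx), ?_, ?_⟩
  · rw [TwoSidedIdeal.coe_mk']
    ext f
    simp only [Set.mem_setOf_eq, Set.mem_preimage, Set.mem_inter_iff, Set.mem_range,
      SetLike.mem_coe]
    constructor
    · intro h
      exact ⟨h, f, rfl⟩
    · exact fun h => h.1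
  · intro f hf d
    rw [TwoSidedIdeal.mem_mk'] at hf ⊢
    show iota K (homComp K d f) ∈ J
    rw [iota_homComp]
    exact hmg _ hf _

end LPAux
end Aux

/-- The letterplace correspondence: `I ↦ ⟨ι(I)⟩_ℕ` maps graded two-sided
ideals of `F` to letterplace ideals of `P`, `J ↦ ι⁻¹(J ∩ V)` maps letterplace ideals of `P` to
graded two-sided ideals of `F`, and these two assignments are mutually inverse bijections. -/
theorem statement_18 (K : Type*) [Field K] (X : Type*) [Countable X] :
    (∀ I : TwoSidedIdeal (FA K X), IsGradedF K I →
        IsLPIdeal K (nspan K (iota K '' (I : Set (FA K X))))) ∧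
    (∀ J : Ideal (PL K X), IsLPIdeal K J →
        ∃ I : TwoSidedIdeal (FA K X),
          (I : Set (FA K X)) = iota K ⁻¹' ((J : Set (PL K X)) ∩ Set.range (iota K)) ∧
          IsGradedF K I) ∧
    (∀ I : TwoSidedIdeal (FA K X), IsGradedF K I →
        iota K ⁻¹' ((nspan K (iota K '' (I : Set (FA K X))) : Set (PL K X)) ∩
          Set.range (iota K)) = (I : Set (FA K X))) ∧
    (∀ J : Ideal (PL K X), IsLPIdeal K J →
        nspan K (iota K '' (iota K ⁻¹' ((J : Set (PL K X)) ∩ Set.range (iota K)))) = J) := by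
  refine ⟨fun I hI => LPAux.part1 I hI, fun J hJ => LPAux.part2 hJ,
    fun I hI => LPAux.preimage_eq I hI, fun J hJ => LPAux.part4 hJ⟩
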